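/- Let χ : [0,1] → ℝ be continuously differentiable with χ ≥ 0, let α > 0 and ε > 0, let g : [0,1] → ℝ be continuous, and let p, T : [0,1] → ℝ be twice continuously differentiable with p(1) = 0 and T(1) = 0, satisfying for all x ∈ [0,1] the identity α⁻¹·p(x)·x − (d/dx)(x·χ(x)·p'(x)) = (d/dx)(x·χ(x)·T'(x)) − g(x)·x. Then α⁻¹·∫₀¹ p(x)²·x dx + ∫₀¹ χ(x)·(p'(x))²·x dx ≤ √(∫₀¹ χ(x)·(T'(x))²·x dx) · √(∫₀¹ χ(x)·(p'(x))²·x dx) + √(∫₀¹ g(x)²·x dx) · √(∫₀¹ p(x)²·x dx). -/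

import Mathlib

open MeasureTheory intervalIntegral Set Topology Filter

lemma cs_meas {μ : Measure ℝ} (f h : ℝ → ℝ)
    (hf : Integrable (fun x => f x ^ 2) μ) (hh : Integrable (fun x => h x ^ 2) μ)
    (hfh : Integrable (fun x => f x * h x) μ) :
    ∫ x, f x * h x ∂μ ≤ Real.sqrt (∫ x, f x ^ 2 ∂μ) * Real.sqrt (∫ x, h x ^ 2 ∂μ) := by
  set A := ∫ x, f x ^ 2 ∂μ
  set B := ∫ x, f x * h x ∂μ
  set C := ∫ x, h x ^ 2 ∂μ
  have hA : 0 ≤ A := integral_nonneg fun x => sq_nonneg _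
  have hC : 0 ≤ C := integral_nonneg fun x => sq_nonneg _
  have key : ∀ t : ℝ, 0 ≤ C * (t * t) + (-2 * B) * t + A := by
    intro t
    have h0 : 0 ≤ ∫ x, (f x - t * h x) ^ 2 ∂μ := integral_nonneg fun x => sq_nonneg _
    have hexp : (fun x => (f x - t * h x) ^ 2)
        = fun x => (f x ^ 2 + t ^ 2 * h x ^ 2) - (2 * t) * (f x * h x) := by
      funext x; ring
    have i1 : Integrable (fun x => f x ^ 2 + t ^ 2 * h x ^ 2) μ := hf.add (hh.const_mul _)
    have i2 : Integrable (fun x => (2 * t) * (f x * h x)) μ := hfh.const_mul _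
    rw [hexp, integral_sub i1 i2, integral_add hf (hh.const_mul _), MeasureTheory.integral_const_mul,
      MeasureTheory.integral_const_mul] at h0
    nlinarith [h0]
  have hd := discrim_le_zero key
  rw [discrim] at hd
  have hBsq : B ^ 2 ≤ A * C := by nlinarith
  calc B ≤ |B| := le_abs_self B
    _ = Real.sqrt (B ^ 2) := (Real.sqrt_sq_eq_abs B).symm
    _ ≤ Real.sqrt (A * C) := Real.sqrt_le_sqrt hBsq
    _ = Real.sqrt A * Real.sqrt C := Real.sqrt_mul hA C

lemma cs_interval (f h : ℝ → ℝ) (hf : ContinuousOn f (Icc 0 1)) (hh : ContinuousOn h (Icc 0 1)) :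
    ∫ x in (0:ℝ)..1, f x * h x
      ≤ Real.sqrt (∫ x in (0:ℝ)..1, f x ^ 2) * Real.sqrt (∫ x in (0:ℝ)..1, h x ^ 2) := by
  have I2 : ∀ u : ℝ → ℝ, ContinuousOn u (Icc 0 1) →
      Integrable u (volume.restrict (Ioc (0:ℝ) 1)) := by
    intro u hu
    rw [← IntegrableOn]
    exact (hu.integrableOn_Icc).mono_set Ioc_subset_Icc_self
  rw [intervalIntegral.integral_of_le zero_le_one, intervalIntegral.integral_of_le zero_le_one,
    intervalIntegral.integral_of_le zero_le_one]
  exact cs_meas f h (I2 _ (hf.pow 2)) (I2 _ (hh.pow 2)) (I2 _ (hf.mul hh))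

/-- Cauchy–Schwarz energy estimate obtained by testing the quasi-steady adjoint
equation (α⁻¹Id − (1/x)∂ₓ(xχ∂ₓ·))p = (1/x)∂ₓ(xχ∂ₓT) − g (multiplied by the weight x)
against the costate p with respect to the measure x dx. -/
theorem adjoint_cauchy_schwarz_estimate
    (χ : ℝ → ℝ) (hχ : ContDiffOn ℝ 1 χ (Set.Icc 0 1))
    (hχ0 : ∀ x ∈ Set.Icc (0:ℝ) 1, 0 ≤ χ x)
    (α ε : ℝ) (hα : 0 < α) (hε : 0 < ε)
    (g : ℝ → ℝ) (hg : ContinuousOn g (Set.Icc 0 1))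
    (p T : ℝ → ℝ)
    (hp : ContDiffOn ℝ 2 p (Set.Icc 0 1))
    (hT : ContDiffOn ℝ 2 T (Set.Icc 0 1))
    (hp1 : p 1 = 0) (hT1 : T 1 = 0)
    (heq : ∀ x ∈ Set.Icc (0:ℝ) 1,
      α⁻¹ * p x * x - deriv (fun y => y * χ y * deriv p y) x
        = deriv (fun y => y * χ y * deriv T y) x - g x * x) :
    α⁻¹ * (∫ x in (0:ℝ)..1, (p x) ^ 2 * x)
      + (∫ x in (0:ℝ)..1, χ x * (deriv p x) ^ 2 * x)
    ≤ Real.sqrt (∫ x in (0:ℝ)..1, χ x * (deriv T x) ^ 2 * x)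
        * Real.sqrt (∫ x in (0:ℝ)..1, χ x * (deriv p x) ^ 2 * x)
      + Real.sqrt (∫ x in (0:ℝ)..1, (g x) ^ 2 * x)
        * Real.sqrt (∫ x in (0:ℝ)..1, (p x) ^ 2 * x) := by
  have h01 : (0:ℝ) < 1 := one_pos
  have hU : UniqueDiffOn ℝ (Icc (0:ℝ) 1) := uniqueDiffOn_Icc h01
  have hIoo : ∀ x ∈ Ioo (0:ℝ) 1, Icc (0:ℝ) 1 ∈ 𝓝 x := fun x hx => Icc_mem_nhds hx.1 hx.2
  set q : ℝ → ℝ := derivWithin p (Icc 0 1) with hqdef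
  set r : ℝ → ℝ := derivWithin T (Icc 0 1) with hrdef
  have hq1 : ContDiffOn ℝ 1 q (Icc 0 1) := hp.derivWithin hU (by norm_num)
  have hr1 : ContDiffOn ℝ 1 r (Icc 0 1) := hT.derivWithin hU (by norm_num)
  have hq_eq : ∀ x ∈ Ioo (0:ℝ) 1, q x = deriv p x :=
    fun x hx => derivWithin_of_mem_nhds (hIoo x hx)
  have hr_eq : ∀ x ∈ Ioo (0:ℝ) 1, r x = deriv T x :=
    fun x hx => derivWithin_of_mem_nhds (hIoo x hx)
  have hpd : ∀ x ∈ Ioo (0:ℝ) 1, HasDerivAt p (q x) x := by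
    intro x hx
    have hd : DifferentiableAt ℝ p x :=
      (hp.contDiffAt (hIoo x hx)).differentiableAt (by norm_num)
    rw [hq_eq x hx]
    exact hd.hasDerivAt
  -- the fluxes
  set Φp : ℝ → ℝ := fun y => y * χ y * q y with hΦpdef
  set Φt : ℝ → ℝ := fun y => y * χ y * r y with hΦtdef
  have hΦp : ContDiffOn ℝ 1 Φp (Icc 0 1) := (contDiffOn_id.mul hχ).mul hq1
  have hΦt : ContDiffOn ℝ 1 Φt (Icc 0 1) := (contDiffOn_id.mul hχ).mul hr1
  set A : ℝ → ℝ := derivWithin Φp (Icc 0 1) with hAdef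
  set B : ℝ → ℝ := derivWithin Φt (Icc 0 1) with hBdef
  have hA_cont : ContinuousOn A (Icc 0 1) := hΦp.continuousOn_derivWithin hU le_rfl
  have hB_cont : ContinuousOn B (Icc 0 1) := hΦt.continuousOn_derivWithin hU le_rfl
  have hΦpd : ∀ x ∈ Ioo (0:ℝ) 1, HasDerivAt Φp (A x) x := by
    intro x hx
    have hd : DifferentiableAt ℝ Φp x :=
      (hΦp.contDiffAt (hIoo x hx)).differentiableAt (by norm_num)
    have : A x = deriv Φp x := derivWithin_of_mem_nhds (hIoo x hx)
    rw [this]; exact hd.hasDerivAt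
  have hΦtd : ∀ x ∈ Ioo (0:ℝ) 1, HasDerivAt Φt (B x) x := by
    intro x hx
    have hd : DifferentiableAt ℝ Φt x :=
      (hΦt.contDiffAt (hIoo x hx)).differentiableAt (by norm_num)
    have : B x = deriv Φt x := derivWithin_of_mem_nhds (hIoo x hx)
    rw [this]; exact hd.hasDerivAt
  have hA_eq : ∀ x ∈ Ioo (0:ℝ) 1, A x = deriv (fun y => y * χ y * deriv p y) x := by
    intro x hx
    have h1 : A x = deriv Φp x := derivWithin_of_mem_nhds (hIoo x hx)
    have h2 : deriv Φp x = deriv (fun y => y * χ y * deriv p y) x := by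
      apply Filter.EventuallyEq.deriv_eq
      filter_upwards [isOpen_Ioo.mem_nhds hx] with y hy
      rw [hΦpdef]; simp only [hq_eq y hy]
    rw [h1, h2]
  have hB_eq : ∀ x ∈ Ioo (0:ℝ) 1, B x = deriv (fun y => y * χ y * deriv T y) x := by
    intro x hx
    have h1 : B x = deriv Φt x := derivWithin_of_mem_nhds (hIoo x hx)
    have h2 : deriv Φt x = deriv (fun y => y * χ y * deriv T y) x := by
      apply Filter.EventuallyEq.deriv_eq
      filter_upwards [isOpen_Ioo.mem_nhds hx] with y hy
      rw [hΦtdef]; simp only [hr_eq y hy]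
    rw [h1, h2]
  -- integrability helper
  have intg : ∀ u : ℝ → ℝ, ContinuousOn u (Icc 0 1) → IntervalIntegrable u volume 0 1 := by
    intro u hu
    apply ContinuousOn.intervalIntegrable
    rwa [Set.uIcc_of_le h01.le]
  have hpc : ContinuousOn p (Icc (0:ℝ) 1) := hp.continuousOn
  -- FTC for F = p * Φp
  have key1 : (∫ x in (0:ℝ)..1, (q x * Φp x + p x * A x)) = 0 := by
    have hcont : ContinuousOn (fun x => p x * Φp x) (Icc (0:ℝ) 1) := hpc.mul hΦp.continuousOn
    have hderiv : ∀ x ∈ Ioo (0:ℝ) 1,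
        HasDerivAt (fun x => p x * Φp x) (q x * Φp x + p x * A x) x :=
      fun x hx => (hpd x hx).mul (hΦpd x hx)
    have hint : IntervalIntegrable (fun x => q x * Φp x + p x * A x) volume 0 1 :=
      intg _ ((hq1.continuousOn.mul hΦp.continuousOn).add (hpc.mul hA_cont))
    rw [intervalIntegral.integral_eq_sub_of_hasDerivAt_of_le h01.le hcont hderiv hint]
    simp [hΦpdef, hp1]
  have key2 : (∫ x in (0:ℝ)..1, (q x * Φt x + p x * B x)) = 0 := by
    have hcont : ContinuousOn (fun x => p x * Φt x) (Icc (0:ℝ) 1) := hpc.mul hΦt.continuousOn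
    have hderiv : ∀ x ∈ Ioo (0:ℝ) 1,
        HasDerivAt (fun x => p x * Φt x) (q x * Φt x + p x * B x) x :=
      fun x hx => (hpd x hx).mul (hΦtd x hx)
    have hint : IntervalIntegrable (fun x => q x * Φt x + p x * B x) volume 0 1 :=
      intg _ ((hq1.continuousOn.mul hΦt.continuousOn).add (hpc.mul hB_cont))
    rw [intervalIntegral.integral_eq_sub_of_hasDerivAt_of_le h01.le hcont hderiv hint]
    simp [hΦtdef, hp1]
  -- split the FTC identities
  have i_qΦp : IntervalIntegrable (fun x => q x * Φp x) volume 0 1 :=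
    intg _ (hq1.continuousOn.mul hΦp.continuousOn)
  have i_qΦt : IntervalIntegrable (fun x => q x * Φt x) volume 0 1 :=
    intg _ (hq1.continuousOn.mul hΦt.continuousOn)
  have i_pA : IntervalIntegrable (fun x => p x * A x) volume 0 1 := intg _ (hpc.mul hA_cont)
  have i_pB : IntervalIntegrable (fun x => p x * B x) volume 0 1 := intg _ (hpc.mul hB_cont)
  have e1 : (∫ x in (0:ℝ)..1, p x * A x) = -(∫ x in (0:ℝ)..1, q x * Φp x) := by
    have := intervalIntegral.integral_add i_qΦp i_pA
    rw [key1] at this; linarith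
  have e2 : (∫ x in (0:ℝ)..1, p x * B x) = -(∫ x in (0:ℝ)..1, q x * Φt x) := by
    have := intervalIntegral.integral_add i_qΦt i_pB
    rw [key2] at this; linarith
  -- testing the equation with p
  have hae : ∀ᵐ x : ℝ, x ≠ (1:ℝ) := by
    have : volume ({(1:ℝ)} : Set ℝ) = 0 := Real.volume_singleton
    rw [MeasureTheory.ae_iff]
    convert this using 2
    ext y; simp
  have eq_int : (∫ x in (0:ℝ)..1, p x * (α⁻¹ * p x * x - A x))
      = ∫ x in (0:ℝ)..1, p x * (B x - g x * x) := by
    apply intervalIntegral.integral_congr_ae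
    filter_upwards [hae] with x hx1 hxI
    rw [Set.uIoc_of_le h01.le] at hxI
    have hxo : x ∈ Ioo (0:ℝ) 1 := ⟨hxI.1, lt_of_le_of_ne hxI.2 hx1⟩
    rw [hA_eq x hxo, hB_eq x hxo, heq x (Ioo_subset_Icc_self hxo)]
  -- expand both sides
  have i_p2x : IntervalIntegrable (fun x => α⁻¹ * ((p x) ^ 2 * x)) volume 0 1 :=
    intg _ (((hpc.pow 2).mul continuousOn_id).const_smul α⁻¹)
  have i_pgx : IntervalIntegrable (fun x => p x * (g x * x)) volume 0 1 :=
    intg _ (hpc.mul (hg.mul continuousOn_id))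
  have lhs_split : (∫ x in (0:ℝ)..1, p x * (α⁻¹ * p x * x - A x))
      = α⁻¹ * (∫ x in (0:ℝ)..1, (p x) ^ 2 * x) - ∫ x in (0:ℝ)..1, p x * A x := by
    have hcg : EqOn (fun x => p x * (α⁻¹ * p x * x - A x))
        (fun x => α⁻¹ * ((p x) ^ 2 * x) - p x * A x) (Set.uIcc (0:ℝ) 1) :=
      fun x _ => by ring
    rw [intervalIntegral.integral_congr hcg, intervalIntegral.integral_sub i_p2x i_pA,
      intervalIntegral.integral_const_mul]
  have rhs_split : (∫ x in (0:ℝ)..1, p x * (B x - g x * x))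
      = (∫ x in (0:ℝ)..1, p x * B x) - ∫ x in (0:ℝ)..1, p x * (g x * x) := by
    have hcg : EqOn (fun x => p x * (B x - g x * x))
        (fun x => p x * B x - p x * (g x * x)) (Set.uIcc (0:ℝ) 1) :=
      fun x _ => by ring
    rw [intervalIntegral.integral_congr hcg, intervalIntegral.integral_sub i_pB i_pgx]
  -- rewrite q*Φp integral in standard form
  have eΦp : (∫ x in (0:ℝ)..1, q x * Φp x) = ∫ x in (0:ℝ)..1, χ x * (q x) ^ 2 * x := by
    apply intervalIntegral.integral_congr
    intro x _
    simp only [hΦpdef]; ring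
  -- main energy identity
  have energy : α⁻¹ * (∫ x in (0:ℝ)..1, (p x) ^ 2 * x) + (∫ x in (0:ℝ)..1, χ x * (q x) ^ 2 * x)
      = -(∫ x in (0:ℝ)..1, q x * Φt x) - ∫ x in (0:ℝ)..1, p x * (g x * x) := by
    rw [lhs_split, rhs_split] at eq_int
    rw [e1, e2, eΦp] at eq_int
    linarith [eq_int]
  -- Cauchy–Schwarz 1 : flux term
  have sq_chi : ∀ x ∈ Icc (0:ℝ) 1, Real.sqrt (χ x * x) * Real.sqrt (χ x * x) = χ x * x :=
    fun x hx => Real.mul_self_sqrt (mul_nonneg (hχ0 x hx) hx.1)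
  have hsc : ContinuousOn (fun x => Real.sqrt (χ x * x)) (Icc (0:ℝ) 1) :=
    (hχ.continuousOn.mul continuousOn_id).sqrt
  have cs1 : -(∫ x in (0:ℝ)..1, q x * Φt x)
      ≤ Real.sqrt (∫ x in (0:ℝ)..1, χ x * (r x) ^ 2 * x)
        * Real.sqrt (∫ x in (0:ℝ)..1, χ x * (q x) ^ 2 * x) := by
    have hf : ContinuousOn (fun x => -(Real.sqrt (χ x * x) * r x)) (Icc (0:ℝ) 1) :=
      (hsc.mul hr1.continuousOn).neg
    have hh : ContinuousOn (fun x => Real.sqrt (χ x * x) * q x) (Icc (0:ℝ) 1) :=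
      hsc.mul hq1.continuousOn
    have := cs_interval _ _ hf hh
    have e_fh : (∫ x in (0:ℝ)..1, (-(Real.sqrt (χ x * x) * r x)) * (Real.sqrt (χ x * x) * q x))
        = -(∫ x in (0:ℝ)..1, q x * Φt x) := by
      rw [← intervalIntegral.integral_neg]
      apply intervalIntegral.integral_congr
      intro x hx
      rw [Set.uIcc_of_le h01.le] at hx
      have hs := sq_chi x hx
      simp only [hΦtdef]
      linear_combination (-(r x * q x)) * hs
    have e_f2 : (∫ x in (0:ℝ)..1, (-(Real.sqrt (χ x * x) * r x)) ^ 2)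
        = ∫ x in (0:ℝ)..1, χ x * (r x) ^ 2 * x := by
      apply intervalIntegral.integral_congr
      intro x hx
      rw [Set.uIcc_of_le h01.le] at hx
      have hs := sq_chi x hx
      linear_combination (r x ^ 2) * hs
    have e_h2 : (∫ x in (0:ℝ)..1, (Real.sqrt (χ x * x) * q x) ^ 2)
        = ∫ x in (0:ℝ)..1, χ x * (q x) ^ 2 * x := by
      apply intervalIntegral.integral_congr
      intro x hx
      rw [Set.uIcc_of_le h01.le] at hx
      have hs := sq_chi x hx
      linear_combination (q x ^ 2) * hs
    rw [e_fh, e_f2, e_h2] at this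
    exact this
  -- Cauchy–Schwarz 2 : source term
  have sq_x : ∀ x ∈ Icc (0:ℝ) 1, Real.sqrt x * Real.sqrt x = x :=
    fun x hx => Real.mul_self_sqrt hx.1
  have hsx : ContinuousOn (fun x => Real.sqrt x) (Icc (0:ℝ) 1) :=
    continuousOn_id.sqrt
  have cs2 : -(∫ x in (0:ℝ)..1, p x * (g x * x))
      ≤ Real.sqrt (∫ x in (0:ℝ)..1, (g x) ^ 2 * x)
        * Real.sqrt (∫ x in (0:ℝ)..1, (p x) ^ 2 * x) := by
    have hf : ContinuousOn (fun x => -(Real.sqrt x * g x)) (Icc (0:ℝ) 1) := (hsx.mul hg).neg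
    have hh : ContinuousOn (fun x => Real.sqrt x * p x) (Icc (0:ℝ) 1) := hsx.mul hpc
    have := cs_interval _ _ hf hh
    have e_fh : (∫ x in (0:ℝ)..1, (-(Real.sqrt x * g x)) * (Real.sqrt x * p x))
        = -(∫ x in (0:ℝ)..1, p x * (g x * x)) := by
      rw [← intervalIntegral.integral_neg]
      apply intervalIntegral.integral_congr
      intro x hx
      rw [Set.uIcc_of_le h01.le] at hx
      have hs := sq_x x hx
      show -(Real.sqrt x * g x) * (Real.sqrt x * p x) = -(p x * (g x * x))
      linear_combination (-(g x * p x)) * hs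
    have e_f2 : (∫ x in (0:ℝ)..1, (-(Real.sqrt x * g x)) ^ 2)
        = ∫ x in (0:ℝ)..1, (g x) ^ 2 * x := by
      apply intervalIntegral.integral_congr
      intro x hx
      rw [Set.uIcc_of_le h01.le] at hx
      have hs := sq_x x hx
      show (-(Real.sqrt x * g x)) ^ 2 = (g x) ^ 2 * x
      linear_combination (g x ^ 2) * hs
    have e_h2 : (∫ x in (0:ℝ)..1, (Real.sqrt x * p x) ^ 2)
        = ∫ x in (0:ℝ)..1, (p x) ^ 2 * x := by
      apply intervalIntegral.integral_congr
      intro x hx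
      rw [Set.uIcc_of_le h01.le] at hx
      have hs := sq_x x hx
      show (Real.sqrt x * p x) ^ 2 = (p x) ^ 2 * x
      linear_combination (p x ^ 2) * hs
    rw [e_fh, e_f2, e_h2] at this
    exact this
  -- replace deriv by derivWithin in the goal
  have gq : (∫ x in (0:ℝ)..1, χ x * (deriv p x) ^ 2 * x)
      = ∫ x in (0:ℝ)..1, χ x * (q x) ^ 2 * x := by
    apply intervalIntegral.integral_congr_ae
    filter_upwards [hae] with x hx1 hxI
    rw [Set.uIoc_of_le h01.le] at hxI
    have hxo : x ∈ Ioo (0:ℝ) 1 := ⟨hxI.1, lt_of_le_of_ne hxI.2 hx1⟩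
    rw [hq_eq x hxo]
  have gr : (∫ x in (0:ℝ)..1, χ x * (deriv T x) ^ 2 * x)
      = ∫ x in (0:ℝ)..1, χ x * (r x) ^ 2 * x := by
    apply intervalIntegral.integral_congr_ae
    filter_upwards [hae] with x hx1 hxI
    rw [Set.uIoc_of_le h01.le] at hxI
    have hxo : x ∈ Ioo (0:ℝ) 1 := ⟨hxI.1, lt_of_le_of_ne hxI.2 hx1⟩
    rw [hr_eq x hxo]
  rw [gq, gr, energy]
  linarith [cs1, cs2]
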